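/- Let A be an annotated automaton over the multiplicity semiring 𝒩 = (ℕ, +, ·, 0, 1) with finite state set, finite alphabet Δ, finite transition set, initial state and final states, and let L = [A]. Let B be the multi-edge automaton obtained from A by replacing each transition of weight n by n parallel unweighted copies, and for k ≥ 1 let B^k be the Boolean-matrix product NFA built from B (states P_B^k × Ψ_k, initial state (p_{B,0},…,p_{B,0}, ψ_0) with ψ_0 the identity pattern, final states F_B^k × {all-ones matrix}, and transitions that simultaneously advance k edges of B on the same letter while setting ψ'[i,j] = 1 iff ψ[i,j] = 1 or the i-th and j-th chosen edges differ). Then ⌊L^{k̆}⌋ = L(B^k): a word w satisfies [A](w) ≥ k if and only if w is accepted by B^k. -/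

import Mathlib

/-- The annotated language `[A]` of an annotated automaton over the
multiplicity semiring `𝒩 = (ℕ, +, ·, 0, 1)`: `multVal τ F w q` is the sum over
accepting transition paths spelling `w` from `q` of the product of the
transition weights along the path (`0` if there is none). -/
def multVal {P Δ : Type*} [DecidableEq P] [DecidableEq Δ]
    (τ : Finset (P × Δ × ℕ × P)) (F : Finset P) : List Δ → P → ℕ
  | [], q => if q ∈ F then 1 else 0
  | r :: w, q =>
      ∑ t ∈ τ, if t.1 = q ∧ t.2.1 = r then t.2.2.1 * multVal τ F w t.2.2.2 else 0

/-- The Boolean-matrix product NFA `B^k` of a multi-edge automaton `B` with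
edge type `E`: states are `k`-tuples of states of `B` with a `k × k` Boolean
matrix; the initial state is `(p_{B,0},…,p_{B,0}, ψ_0)` with `ψ_0` the identity
pattern; final states are `F_B^k × {all-ones}`; transitions simultaneously
advance `k` edges of `B` on the same letter, setting `ψ'[i,j] = 1` iff
`ψ[i,j] = 1` or the `i`-th and `j`-th chosen edges differ. -/
def powerNFA {P Δ E : Type*} [DecidableEq E] (src tgt : E → P) (lbl : E → Δ)
    (k : ℕ) (p0 : P) (Fb : Set P) :
    NFA Δ ((Fin k → P) × (Fin k → Fin k → Bool)) where
  step := fun s r =>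
    {s' | ∃ e : Fin k → E,
      (∀ i, lbl (e i) = r ∧ src (e i) = s.1 i ∧ tgt (e i) = s'.1 i) ∧
      s'.2 = fun i j => s.2 i j || decide (e i ≠ e j)}
  start := {(fun _ => p0, fun i j => decide (i = j))}
  accept := {s | (∀ i, s.1 i ∈ Fb) ∧ s.2 = fun _ _ => true}

/-- The edge type of the multi-edge automaton `B` obtained from a multiplicity
annotated automaton with transition set `τ` by replacing each transition of
weight `n` by `n` parallel unweighted copies: an edge is a pair of a
transition `t ∈ τ` and an index `j < weight(t)` selecting one copy. -/
abbrev MultiEdge {P Δ : Type*} (τ : Finset (P × Δ × ℕ × P)) : Type _ :=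
  {e : (P × Δ × ℕ × P) × ℕ // e.1 ∈ τ ∧ e.2 < e.1.2.2.1}

section Aux

/-! ### Generic walks and the power NFA -/

variable {P Δ E : Type*} [DecidableEq E] (src tgt : E → P) (lbl : E → Δ)

/-- A walk in the multi-edge automaton from `q` spelling `w` ending in `q'`. -/
def MEWalk : P → List Δ → List E → P → Prop
  | q, [], [], q' => q' = q
  | q, r :: w, e :: es, q' => lbl e = r ∧ src e = q ∧ MEWalk (tgt e) w es q'
  | _, _, _, _ => False

lemma bool_cons_ne (x y : E) (xs ys : List E) :
    (decide (x ≠ y) || decide (xs ≠ ys)) = decide (x :: xs ≠ y :: ys) := by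
  by_cases h1 : x = y <;> by_cases h2 : xs = ys <;> simp [h1, h2]

lemma mem_evalFrom_powerNFA (k : ℕ) (p0 : P) (Fb : Set P) :
    ∀ (w : List Δ) (S : Set ((Fin k → P) × (Fin k → Fin k → Bool)))
      (s : (Fin k → P) × (Fin k → Fin k → Bool)),
      s ∈ (powerNFA src tgt lbl k p0 Fb).evalFrom S w ↔
        ∃ s0 ∈ S, ∃ es : Fin k → List E,
          (∀ i, MEWalk src tgt lbl (s0.1 i) w (es i) (s.1 i)) ∧
          s.2 = fun i j => s0.2 i j || decide (es i ≠ es j)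
  | [] => by
    intro S s
    constructor
    · intro hs
      exact ⟨s, hs, fun _ => [], fun i => rfl, by
        funext i j; simp⟩
    · rintro ⟨s0, hs0, es, hW, hψ⟩
      have h : ∀ i, es i = [] ∧ s.1 i = s0.1 i := by
        intro i
        cases h : es i with
        | nil => have := hW i; rw [h] at this; exact ⟨rfl, this⟩
        | cons a l => have := hW i; rw [h] at this; exact absurd this (by simp [MEWalk])
      have hs1 : s.1 = s0.1 := funext fun i => (h i).2
      have hs2 : s.2 = s0.2 := by
        rw [hψ]; funext i j; rw [(h i).1, (h j).1]; simp
      have : s = s0 := Prod.ext hs1 hs2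
      rw [this]; exact hs0
  | r :: w => by
    intro S s
    have hstep : (powerNFA src tgt lbl k p0 Fb).evalFrom S (r :: w)
        = (powerNFA src tgt lbl k p0 Fb).evalFrom
            ((powerNFA src tgt lbl k p0 Fb).stepSet S r) w := rfl
    rw [hstep, mem_evalFrom_powerNFA k p0 Fb w]
    constructor
    · rintro ⟨s1, hs1, es, hW, hψ⟩
      rw [NFA.mem_stepSet] at hs1
      obtain ⟨s0, hs0, e, he, hψ1⟩ := hs1
      refine ⟨s0, hs0, fun i => e i :: es i, fun i => ?_, ?_⟩
      · exact ⟨(he i).1, (he i).2.1, by rw [(he i).2.2]; exact hW i⟩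
      · rw [hψ, hψ1]
        funext i j
        rw [Bool.or_assoc, bool_cons_ne]
    · rintro ⟨s0, hs0, es', hW, hψ⟩
      have hne : ∀ i, es' i ≠ [] := by
        intro i h
        have := hW i; rw [h] at this; exact absurd this (by simp [MEWalk])
      set e : Fin k → E := fun i => (es' i).head (hne i) with he_def
      set es : Fin k → List E := fun i => (es' i).tail with hes_def
      have hcons : ∀ i, es' i = e i :: es i := fun i => (List.cons_head_tail (hne i)).symm
      have hWc : ∀ i, lbl (e i) = r ∧ src (e i) = s0.1 i ∧
          MEWalk src tgt lbl (tgt (e i)) w (es i) (s.1 i) := by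
        intro i
        have := hW i; rw [hcons i] at this; exact this
      refine ⟨(fun i => tgt (e i), fun i j => s0.2 i j || decide (e i ≠ e j)),
        ?_, es, fun i => (hWc i).2.2, ?_⟩
      · rw [NFA.mem_stepSet]
        exact ⟨s0, hs0, e, fun i => ⟨(hWc i).1, (hWc i).2.1, rfl⟩, rfl⟩
      · rw [hψ]
        funext i j
        rw [hcons i, hcons j, ← bool_cons_ne, Bool.or_assoc]

lemma mem_accepts_powerNFA (k : ℕ) (p0 : P) (Fb : Set P) (w : List Δ) :
    w ∈ (powerNFA src tgt lbl k p0 Fb).accepts ↔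
      ∃ es : Fin k → List E,
        (∀ i, ∃ q' ∈ Fb, MEWalk src tgt lbl p0 w (es i) q') ∧
        Function.Injective es := by
  rw [NFA.mem_accepts]
  constructor
  · rintro ⟨s, hacc, hev⟩
    have hev' : s ∈ (powerNFA src tgt lbl k p0 Fb).evalFrom
        (powerNFA src tgt lbl k p0 Fb).start w := hev
    rw [mem_evalFrom_powerNFA] at hev'
    obtain ⟨s0, hs0, es, hW, hψ⟩ := hev'
    have hs0' : s0 = ((fun _ => p0), fun i j => decide (i = j)) := hs0
    refine ⟨es, fun i => ⟨s.1 i, hacc.1 i, by have := hW i; rw [hs0'] at this; exact this⟩, ?_⟩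
    intro i j hij
    by_contra hne
    have hij' : i ≠ j := fun h => hne (by rw [h])
    have := congrFun (congrFun (hacc.2.symm.trans hψ) i) j
    rw [hs0'] at this
    simp [hij', hij] at this
  · rintro ⟨es, hW, hinj⟩
    choose qf hqf hWalk using hW
    refine ⟨(qf, fun _ _ => true), ⟨fun i => hqf i, rfl⟩, ?_⟩
    show _ ∈ (powerNFA src tgt lbl k p0 Fb).evalFrom (powerNFA src tgt lbl k p0 Fb).start w
    rw [mem_evalFrom_powerNFA]
    refine ⟨((fun _ => p0), fun i j => decide (i = j)), rfl, es, hWalk, ?_⟩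
    funext i j
    by_cases hij : i = j
    · simp [hij]
    · have : es i ≠ es j := fun h => hij (hinj h)
      simp [hij, this]

end Aux

section Count

variable {P Δ : Type*} [DecidableEq P] [DecidableEq Δ]
variable (τ : Finset (P × Δ × ℕ × P)) (F : Finset P)

instance : DecidableEq (List (MultiEdge τ)) := List.hasDecEq

/-- Equivalence of the multi-edge type with a sigma type, used for finiteness
and counting. -/
def meEquiv : MultiEdge τ ≃ Σ t : {t // t ∈ τ}, Fin t.1.2.2.1 where
  toFun e := ⟨⟨e.1.1, e.2.1⟩, ⟨e.1.2, e.2.2⟩⟩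
  invFun x := ⟨(x.1.1, x.2.1), x.1.2, x.2.2⟩
  left_inv e := rfl
  right_inv x := rfl

noncomputable instance : Fintype (MultiEdge τ) := Fintype.ofEquiv _ (meEquiv τ).symm

/-- The finite set of accepting edge-paths spelling `w` from `q`. -/
noncomputable def mePaths : List Δ → P → Finset (List (MultiEdge τ))
  | [], q => if q ∈ F then {[]} else ∅
  | r :: w, q =>
      (Finset.univ.filter fun e : MultiEdge τ => e.1.1.2.1 = r ∧ e.1.1.1 = q).biUnion
        fun e => (mePaths w e.1.1.2.2.2).image (e :: ·)

lemma multVal_eq_card : ∀ (w : List Δ) (q : P),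
    multVal τ F w q = (mePaths τ F w q).card
  | [], q => by
    rw [multVal, mePaths]
    by_cases h : q ∈ F <;> simp [h]
  | r :: w, q => by
    rw [multVal, mePaths]
    rw [Finset.card_biUnion (by
      intro a _ b _ hab
      refine Finset.disjoint_left.mpr ?_
      rintro x hx hx'
      obtain ⟨l, _, rfl⟩ := Finset.mem_image.mp hx
      obtain ⟨l', _, h'⟩ := Finset.mem_image.mp hx'
      exact hab (by injection h'.symm))]
    have himg : ∀ e : MultiEdge τ,
        ((mePaths τ F w e.1.1.2.2.2).image (e :: ·)).card
          = (mePaths τ F w e.1.1.2.2.2).card := by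
      intro e
      exact Finset.card_image_of_injective _ (fun a b h => by injection h)
    simp_rw [himg]
    rw [Finset.sum_filter]
    have key : ∑ e : MultiEdge τ,
        (if e.1.1.2.1 = r ∧ e.1.1.1 = q then (mePaths τ F w e.1.1.2.2.2).card else 0)
        = ∑ t ∈ τ, if t.1 = q ∧ t.2.1 = r then t.2.2.1 * (mePaths τ F w t.2.2.2).card else 0 := by
      rw [← Equiv.sum_comp (meEquiv τ).symm]
      rw [← Finset.univ_sigma_univ, Finset.sum_sigma]
      rw [← Finset.sum_coe_sort τ
        (fun t => if t.1 = q ∧ t.2.1 = r then t.2.2.1 * (mePaths τ F w t.2.2.2).card else 0)]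
      refine Finset.sum_congr rfl ?_
      intro t _
      show ∑ _j : Fin t.1.2.2.1,
          (if t.1.2.1 = r ∧ t.1.1 = q then (mePaths τ F w t.1.2.2.2).card else 0) = _
      rw [Finset.sum_const, Finset.card_univ, Fintype.card_fin, smul_eq_mul]
      by_cases h : t.1.1 = q ∧ t.1.2.1 = r
      · simp [h.1, h.2]
      · have h' : ¬(t.1.2.1 = r ∧ t.1.1 = q) := fun hh => h ⟨hh.2, hh.1⟩
        simp [h, h']
    rw [key]
    refine Finset.sum_congr rfl ?_
    intro t _
    by_cases h : t.1 = q ∧ t.2.1 = r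
    · simp [h, multVal_eq_card w t.2.2.2]
    · simp [h]

lemma mem_mePaths : ∀ (w : List Δ) (q : P) (es : List (MultiEdge τ)),
    es ∈ mePaths τ F w q ↔ ∃ q' ∈ F,
      MEWalk (E := MultiEdge τ) (fun e => e.1.1.1) (fun e => e.1.1.2.2.2)
        (fun e => e.1.1.2.1) q w es q'
  | [], q, es => by
    rw [mePaths]
    cases es with
    | nil =>
      by_cases h : q ∈ F <;> simp [h, MEWalk]
    | cons a l =>
      by_cases h : q ∈ F <;> simp [h, MEWalk]
  | r :: w, q, es => by
    rw [mePaths]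
    cases es with
    | nil =>
      simp [MEWalk]
    | cons a l =>
      simp only [Finset.mem_biUnion, Finset.mem_filter, Finset.mem_univ, true_and,
        Finset.mem_image]
      constructor
      · rintro ⟨e, ⟨hlbl, hsrc⟩, l', hl', heq⟩
        obtain ⟨q', hq', hw⟩ := (mem_mePaths w _ l').mp hl'
        cases heq
        exact ⟨q', hq', hlbl, hsrc, hw⟩
      · rintro ⟨q', hq', hlbl, hsrc, hw⟩
        exact ⟨a, ⟨hlbl, hsrc⟩, l, (mem_mePaths w _ l).mpr ⟨q', hq', hw⟩, rfl⟩

end Count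

/-- Let `A` be an annotated automaton over the multiplicity
semiring with `L = [A]`, `B` the multi-edge automaton obtained by replacing
each weight-`n` transition by `n` parallel copies, and `B^k` (for `k ≥ 1`) the
Boolean-matrix product NFA built from `B`. Then `⌊L^{k̆}⌋ = L(B^k)`: a word `w`
satisfies `[A](w) ≥ k` (and `[A](w) ≠ 0`) iff `w` is accepted by `B^k`. -/
theorem outer_sphere_support_eq_powerNFA_language
    {P Δ : Type*} [Fintype P] [DecidableEq P] [Fintype Δ] [DecidableEq Δ]
    (τ : Finset (P × Δ × ℕ × P)) (p0 : P) (F : Finset P)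
    (k : ℕ) (hk : 1 ≤ k) (w : List Δ) :
    (multVal τ F w p0 ≠ 0 ∧ k ≤ multVal τ F w p0) ↔
      w ∈ (powerNFA (E := MultiEdge τ)
        (fun e => e.1.1.1) (fun e => e.1.1.2.2.2) (fun e => e.1.1.2.1)
        k p0 (↑F : Set P)).accepts := by
  rw [multVal_eq_card]
  have h1 : ((mePaths τ F w p0).card ≠ 0 ∧ k ≤ (mePaths τ F w p0).card)
      ↔ k ≤ (mePaths τ F w p0).card :=
    ⟨fun h => h.2, fun h => ⟨fun h0 => by omega, h⟩⟩
  rw [h1, mem_accepts_powerNFA]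
  constructor
  · intro h
    obtain ⟨t, hts, ht⟩ := Finset.exists_subset_card_eq h
    refine ⟨fun i => (t.equivFin.symm (Fin.cast ht.symm i) : List (MultiEdge τ)),
      fun i => ?_, ?_⟩
    · have hm := hts (t.equivFin.symm (Fin.cast ht.symm i)).2
      obtain ⟨q', hq', hwalk⟩ := (mem_mePaths τ F w p0 _).mp hm
      exact ⟨q', Finset.mem_coe.mpr hq', hwalk⟩
    · intro i j hij
      have h2 := t.equivFin.symm.injective (Subtype.val_injective hij)
      exact Fin.cast_injective _ h2
  · rintro ⟨es, hW, hinj⟩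
    have hmem : ∀ i, es i ∈ mePaths τ F w p0 := by
      intro i
      obtain ⟨q', hq', hwalk⟩ := hW i
      exact (mem_mePaths τ F w p0 _).mpr ⟨q', Finset.mem_coe.mp hq', hwalk⟩
    calc k = (Finset.univ : Finset (Fin k)).card := by simp
      _ ≤ _ := Finset.card_le_card_of_injOn es (fun i _ => hmem i) hinj.injOn
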